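/- The set of 2N×2N complex matrices F(L_{kl}), F(M_{kl}), F(N_{kl}), F(R_{kl}) for k,l = 1,...,N (defined as in the identification above) spans gl(2N,ℂ) as a complex vector space; equivalently, the map F extends to a Lie algebra isomorphism onto gl(2N,ℂ). -/

import Mathlib

open Matrix Complex

noncomputable section

def Ekl (N : ℕ) (k l : Fin N) : Matrix (Fin N) (Fin N) ℂ := Matrix.single k l 1

def FL (N : ℕ) (k l : Fin N) : Matrix (Fin N ⊕ Fin N) (Fin N ⊕ Fin N) ℂ :=
  I⁻¹ • fromBlocks (-(Ekl N k l)) (I • Ekl N k l) (I • Ekl N k l) (Ekl N k l)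

def FM (N : ℕ) (ℏ : ℝ) (k l : Fin N) : Matrix (Fin N ⊕ Fin N) (Fin N ⊕ Fin N) ℂ :=
  ((ℏ : ℂ) / I) • fromBlocks (-(I • Ekl N k l)) (Ekl N k l) (-(Ekl N k l)) (-(I • Ekl N k l))

def FNg (N : ℕ) (ℏ : ℝ) (k l : Fin N) : Matrix (Fin N ⊕ Fin N) (Fin N ⊕ Fin N) ℂ :=
  ((ℏ : ℂ) / I) • fromBlocks (I • Ekl N k l) (Ekl N k l) (-(Ekl N k l)) (I • Ekl N k l)

def FR (N : ℕ) (ℏ : ℝ) (k l : Fin N) : Matrix (Fin N ⊕ Fin N) (Fin N ⊕ Fin N) ℂ :=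
  ((ℏ : ℂ) ^ 2 / I) • fromBlocks (-(Ekl N k l)) (-(I • Ekl N k l)) (-(I • Ekl N k l)) (Ekl N k l)

set_option maxHeartbeats 1000000 in
lemma id1 (N : ℕ) (ℏ : ℝ) (hℏ : ℏ ≠ 0) (k l : Fin N) :
    Matrix.single (Sum.inl k) (Sum.inl l) (1:ℂ) =
      (-I/4) • FL N k l + (-1/(4*(ℏ:ℂ))) • FM N ℏ k l + (1/(4*(ℏ:ℂ))) • FNg N ℏ k l
      + (-I/(4*(ℏ:ℂ)^2)) • FR N ℏ k l := by
  have hc : (ℏ:ℂ) ≠ 0 := by exact_mod_cast hℏ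
  have hI3 : I^3 = -I := by rw [pow_succ, Complex.I_sq]; ring
  have hI4 : I^4 = 1 := by rw [pow_succ, hI3]; simp [Complex.I_mul_I]
  ext i j
  rcases i with i|i <;> rcases j with j|j <;>
    simp [FL, FM, FNg, FR, Ekl, Matrix.single, Matrix.add_apply, Matrix.smul_apply] <;>
    split_ifs <;> field_simp <;> (try ring) <;> (try ring_nf) <;>
    simp [hI3, hI4, Complex.I_sq] <;> (try ring)

set_option maxHeartbeats 1000000 in
lemma id2 (N : ℕ) (ℏ : ℝ) (hℏ : ℏ ≠ 0) (k l : Fin N) :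
    Matrix.single (Sum.inl k) (Sum.inr l) (1:ℂ) =
      (1/4 : ℂ) • FL N k l + (I/(4*(ℏ:ℂ))) • FM N ℏ k l + (I/(4*(ℏ:ℂ))) • FNg N ℏ k l
      + (-1/(4*(ℏ:ℂ)^2)) • FR N ℏ k l := by
  have hc : (ℏ:ℂ) ≠ 0 := by exact_mod_cast hℏ
  have hI3 : I^3 = -I := by rw [pow_succ, Complex.I_sq]; ring
  have hI4 : I^4 = 1 := by rw [pow_succ, hI3]; simp [Complex.I_mul_I]
  ext i j
  rcases i with i|i <;> rcases j with j|j <;>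
    simp [FL, FM, FNg, FR, Ekl, Matrix.single, Matrix.add_apply, Matrix.smul_apply] <;>
    split_ifs <;> field_simp <;> (try ring) <;> (try ring_nf) <;>
    simp [hI3, hI4, Complex.I_sq] <;> (try ring)

set_option maxHeartbeats 1000000 in
lemma id3 (N : ℕ) (ℏ : ℝ) (hℏ : ℏ ≠ 0) (k l : Fin N) :
    Matrix.single (Sum.inr k) (Sum.inl l) (1:ℂ) =
      (1/4 : ℂ) • FL N k l + (-I/(4*(ℏ:ℂ))) • FM N ℏ k l + (-I/(4*(ℏ:ℂ))) • FNg N ℏ k l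
      + (-1/(4*(ℏ:ℂ)^2)) • FR N ℏ k l := by
  have hc : (ℏ:ℂ) ≠ 0 := by exact_mod_cast hℏ
  have hI3 : I^3 = -I := by rw [pow_succ, Complex.I_sq]; ring
  have hI4 : I^4 = 1 := by rw [pow_succ, hI3]; simp [Complex.I_mul_I]
  ext i j
  rcases i with i|i <;> rcases j with j|j <;>
    simp [FL, FM, FNg, FR, Ekl, Matrix.single, Matrix.add_apply, Matrix.smul_apply] <;>
    split_ifs <;> field_simp <;> (try ring) <;> (try ring_nf) <;>
    simp [hI3, hI4, Complex.I_sq] <;> (try ring)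

set_option maxHeartbeats 1000000 in
lemma id4 (N : ℕ) (ℏ : ℝ) (hℏ : ℏ ≠ 0) (k l : Fin N) :
    Matrix.single (Sum.inr k) (Sum.inr l) (1:ℂ) =
      (I/4) • FL N k l + (-1/(4*(ℏ:ℂ))) • FM N ℏ k l + (1/(4*(ℏ:ℂ))) • FNg N ℏ k l
      + (I/(4*(ℏ:ℂ)^2)) • FR N ℏ k l := by
  have hc : (ℏ:ℂ) ≠ 0 := by exact_mod_cast hℏ
  have hI3 : I^3 = -I := by rw [pow_succ, Complex.I_sq]; ring
  have hI4 : I^4 = 1 := by rw [pow_succ, hI3]; simp [Complex.I_mul_I]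
  ext i j
  rcases i with i|i <;> rcases j with j|j <;>
    simp [FL, FM, FNg, FR, Ekl, Matrix.single, Matrix.add_apply, Matrix.smul_apply] <;>
    split_ifs <;> field_simp <;> (try ring) <;> (try ring_nf) <;>
    simp [hI3, hI4, Complex.I_sq] <;> (try ring)

/-- The matrices `F(L_{kl}), F(M_{kl}), F(N_{kl}), F(R_{kl})`, `k,l = 1,…,N`, span
`gl(2N,ℂ)` as a complex vector space (so `F` extends to a Lie algebra isomorphism
onto `gl(2N,ℂ)`). -/
theorem stmt2 (N : ℕ) (ℏ : ℝ) (hℏ : ℏ ≠ 0) :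
    Submodule.span ℂ
      {A : Matrix (Fin N ⊕ Fin N) (Fin N ⊕ Fin N) ℂ |
        ∃ k l : Fin N,
          A = FL N k l ∨ A = FM N ℏ k l ∨ A = FNg N ℏ k l ∨ A = FR N ℏ k l} = ⊤ := by
  classical
  set S : Set (Matrix (Fin N ⊕ Fin N) (Fin N ⊕ Fin N) ℂ) :=
    {A | ∃ k l : Fin N,
      A = FL N k l ∨ A = FM N ℏ k l ∨ A = FNg N ℏ k l ∨ A = FR N ℏ k l} with hS
  have base : ∀ (c1 c2 c3 c4 : ℂ) (k l : Fin N),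
      c1 • FL N k l + c2 • FM N ℏ k l + c3 • FNg N ℏ k l + c4 • FR N ℏ k l ∈
        Submodule.span ℂ S := fun c1 c2 c3 c4 k l =>
    add_mem (add_mem (add_mem
      (Submodule.smul_mem _ _ (Submodule.subset_span ⟨k, l, Or.inl rfl⟩))
      (Submodule.smul_mem _ _ (Submodule.subset_span ⟨k, l, Or.inr (Or.inl rfl)⟩)))
      (Submodule.smul_mem _ _ (Submodule.subset_span ⟨k, l, Or.inr (Or.inr (Or.inl rfl))⟩)))
      (Submodule.smul_mem _ _ (Submodule.subset_span ⟨k, l, Or.inr (Or.inr (Or.inr rfl))⟩))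
  rw [eq_top_iff]
  rintro A -
  rw [Matrix.matrix_eq_sum_single A]
  refine Submodule.sum_mem _ fun i _ => Submodule.sum_mem _ fun j _ => ?_
  have h1 : Matrix.single i j (A i j) = A i j • Matrix.single i j 1 := by
    ext a b; simp [Matrix.single]
  rw [h1]
  refine Submodule.smul_mem _ _ ?_
  rcases i with k|k <;> rcases j with l|l
  · rw [id1 N ℏ hℏ k l]; exact base _ _ _ _ k l
  · rw [id2 N ℏ hℏ k l]; exact base _ _ _ _ k l
  · rw [id3 N ℏ hℏ k l]; exact base _ _ _ _ k l
  · rw [id4 N ℏ hℏ k l]; exact base _ _ _ _ k l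

end
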